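/- Let h : (0, r₀] → (0, ∞) be differentiable and suppose h'(r) = (2 + 2N(r) + E(r))·h(r)/r where N(r) ≥ 0 and |E(r)| ≤ Cr² for all r. Then for 0 < s < r ≤ r₀: h(s) ≤ e^{C(r²−s²)/2}·(s/r)²·exp(−2∫_s^r N(t)/t dt)·h(r) ≤ e^{C r²/2}·(s/r)²·h(r). In particular h(s) ≲ (s/r)²·h(r). -/

import Mathlib

open MeasureTheory Set intervalIntegral

/-- if `h > 0` is differentiable with
`h'(r) = (2 + 2N(r) + E(r)) h(r) / r`, `N ≥ 0` and `|E(r)| ≤ C r²`, then for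
`0 < s < r ≤ r₀`:
`h(s) ≤ e^{C(r²−s²)/2} (s/r)² exp(−2∫ₛʳ N(t)/t dt) h(r) ≤ e^{Cr²/2} (s/r)² h(r)`. -/
theorem stmt_10 (r₀ C : ℝ) (hr₀ : 0 < r₀) (hC : 0 ≤ C)
    (h h' N E : ℝ → ℝ)
    (hpos : ∀ r ∈ Set.Ioc (0 : ℝ) r₀, 0 < h r)
    (hderiv : ∀ r ∈ Set.Ioc (0 : ℝ) r₀, HasDerivAt h (h' r) r)
    (hode : ∀ r ∈ Set.Ioc (0 : ℝ) r₀, h' r = (2 + 2 * N r + E r) * h r / r)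
    (hN : ∀ r ∈ Set.Ioc (0 : ℝ) r₀, 0 ≤ N r)
    (hE : ∀ r ∈ Set.Ioc (0 : ℝ) r₀, |E r| ≤ C * r ^ 2)
    (hint : ∀ s r : ℝ, 0 < s → s ≤ r → r ≤ r₀ →
      IntervalIntegrable (fun t => N t / t) MeasureTheory.volume s r) :
    ∀ s r : ℝ, 0 < s → s < r → r ≤ r₀ →
      h s ≤ Real.exp (C * (r ^ 2 - s ^ 2) / 2) * (s / r) ^ 2 *
              Real.exp (-2 * ∫ t in s..r, N t / t) * h r ∧
      Real.exp (C * (r ^ 2 - s ^ 2) / 2) * (s / r) ^ 2 *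
          Real.exp (-2 * ∫ t in s..r, N t / t) * h r
        ≤ Real.exp (C * r ^ 2 / 2) * (s / r) ^ 2 * h r := by
  intro s r hs hsr hrr
  have hsr' : s ≤ r := hsr.le
  have hr : 0 < r := hs.trans hsr
  have hsmem : s ∈ Set.Ioc (0 : ℝ) r₀ := ⟨hs, hsr'.trans hrr⟩
  have hrmem : r ∈ Set.Ioc (0 : ℝ) r₀ := ⟨hr, hrr⟩
  have hsub : Set.Icc s r ⊆ Set.Ioc (0 : ℝ) r₀ :=
    fun t ht => ⟨hs.trans_le ht.1, ht.2.trans hrr⟩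
  have hsubIoc : Set.Ioc s r ⊆ Set.Icc s r := Set.Ioc_subset_Icc_self
  have huIcc : Set.uIcc s r = Set.Icc s r := Set.uIcc_of_le hsr'
  set I : ℝ := ∫ t in s..r, N t / t with hI_def
  -- the logarithmic derivative formula
  have hφ : ∀ t ∈ Set.Icc s r, h' t / h t = 2 / t + 2 * (N t / t) + E t / t := by
    intro t ht
    have htm := hsub ht
    have ht0 : 0 < t := htm.1
    have hht := hpos t htm
    rw [hode t htm]
    field_simp
  -- integrability pieces
  have hinv_int : IntervalIntegrable (fun t => 2 / t) MeasureTheory.volume s r := by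
    apply ContinuousOn.intervalIntegrable
    apply ContinuousOn.div continuousOn_const continuousOn_id
    intro t ht
    rw [huIcc] at ht
    exact ne_of_gt (hsub ht).1
  have hNint : IntervalIntegrable (fun t => 2 * (N t / t)) MeasureTheory.volume s r :=
    (hint s r hs hsr' hrr).const_mul 2
  have hCt : IntervalIntegrable (fun t => C * t) MeasureTheory.volume s r :=
    (continuous_const.mul continuous_id).intervalIntegrable s r
  have hG : IntervalIntegrable (fun t => 2 / t + 2 * (N t / t) + C * t)
      MeasureTheory.volume s r := (hinv_int.add hNint).add hCt
  -- pointwise bound for the logarithmic derivative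
  have hbound : ∀ t ∈ Set.Icc s r, |h' t / h t| ≤ 2 / t + 2 * (N t / t) + C * t := by
    intro t ht
    have htm := hsub ht
    have ht0 : 0 < t := htm.1
    have hEt := hE t htm
    have hNt := hN t htm
    rw [hφ t ht]
    have habs : |E t / t| ≤ C * t := by
      rw [abs_div, abs_of_pos ht0, div_le_iff₀ ht0]
      calc |E t| ≤ C * t ^ 2 := hEt
        _ = C * t * t := by ring
    have h1 : |2 / t + 2 * (N t / t) + E t / t| ≤ 2 / t + 2 * (N t / t) + |E t / t| := by
      have h2 : (0:ℝ) ≤ 2 / t + 2 * (N t / t) := by positivity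
      calc |2 / t + 2 * (N t / t) + E t / t|
          ≤ |2 / t + 2 * (N t / t)| + |E t / t| := abs_add_le _ _
        _ = 2 / t + 2 * (N t / t) + |E t / t| := by rw [abs_of_nonneg h2]
    linarith
  -- integrability of the logarithmic derivative
  have hφint : IntervalIntegrable (fun t => h' t / h t) MeasureTheory.volume s r := by
    rw [intervalIntegrable_iff_integrableOn_Ioc_of_le hsr']
    have hGon : IntegrableOn (fun t => 2 / t + 2 * (N t / t) + C * t)
        (Set.Ioc s r) MeasureTheory.volume := by
      rw [← intervalIntegrable_iff_integrableOn_Ioc_of_le hsr']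
      exact hG
    apply hGon.integrable.mono'
    · -- measurability
      have hcontOn : ContinuousOn h (Set.Ioc s r) := fun t ht =>
        ((hderiv t (hsub (hsubIoc ht))).continuousAt).continuousWithinAt
      have h1 : AEStronglyMeasurable (fun t => deriv h t / h t)
          (MeasureTheory.volume.restrict (Set.Ioc s r)) :=
        (((measurable_deriv h).aemeasurable).div
          (hcontOn.aemeasurable measurableSet_Ioc)).aestronglyMeasurable
      apply h1.congr
      filter_upwards [MeasureTheory.ae_restrict_mem measurableSet_Ioc] with t ht
      rw [(hderiv t (hsub (hsubIoc ht))).deriv]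
    · filter_upwards [MeasureTheory.ae_restrict_mem measurableSet_Ioc] with t ht
      exact hbound t (hsubIoc ht)
  -- fundamental theorem of calculus for log h
  have hlogFTC : ∫ t in s..r, h' t / h t = Real.log (h r) - Real.log (h s) := by
    apply intervalIntegral.integral_eq_sub_of_hasDerivAt
    · intro t ht
      rw [huIcc] at ht
      have htm := hsub ht
      exact (hderiv t htm).log (ne_of_gt (hpos t htm))
    · exact hφint
  -- lower bound on the integral
  have hlow : IntervalIntegrable (fun t => 2 / t + 2 * (N t / t) - C * t)
      MeasureTheory.volume s r := (hinv_int.add hNint).sub hCt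
  have hmono : (∫ t in s..r, (2 / t + 2 * (N t / t) - C * t))
      ≤ ∫ t in s..r, h' t / h t := by
    apply intervalIntegral.integral_mono_on hsr' hlow hφint
    intro t ht
    have htm := hsub ht
    have ht0 : 0 < t := htm.1
    rw [hφ t ht]
    have hEt := (abs_le.mp (hE t htm)).1
    have : -(C * t) ≤ E t / t := by
      rw [le_div_iff₀ ht0]
      nlinarith
    linarith
  -- compute the lower integral
  have hinv_val : (∫ t in s..r, 2 / t) = 2 * Real.log (r / s) := by
    have h0 : (0:ℝ) ∉ Set.uIcc s r := by
      rw [huIcc]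
      intro h0
      exact absurd h0.1 (not_le.mpr hs)
    simp only [div_eq_mul_inv]
    rw [intervalIntegral.integral_const_mul, integral_inv h0, div_eq_mul_inv]
  have hN_val : (∫ t in s..r, 2 * (N t / t)) = 2 * I := by
    rw [intervalIntegral.integral_const_mul]
  have hCt_val : (∫ t in s..r, C * t) = C * (r ^ 2 - s ^ 2) / 2 := by
    rw [intervalIntegral.integral_const_mul, integral_id]
    ring
  have hlow_val : (∫ t in s..r, (2 / t + 2 * (N t / t) - C * t))
      = 2 * Real.log (r / s) + 2 * I - C * (r ^ 2 - s ^ 2) / 2 := by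
    rw [intervalIntegral.integral_sub (hinv_int.add hNint) hCt,
      intervalIntegral.integral_add hinv_int hNint, hinv_val, hN_val, hCt_val]
  -- the key log inequality
  have hlogineq : Real.log (h s) ≤ Real.log (h r) - 2 * Real.log (r / s) - 2 * I
      + C * (r ^ 2 - s ^ 2) / 2 := by
    rw [hlogFTC, hlow_val] at hmono
    linarith
  have hhr := hpos r hrmem
  have hhs := hpos s hsmem
  have hexp2 : Real.exp (-(2 * Real.log (r / s))) = (s / r) ^ 2 := by
    have h1 : Real.log (s / r) = -Real.log (r / s) := by
      rw [← Real.log_inv, inv_div]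
    have h2 : -(2 * Real.log (r / s)) = Real.log ((s / r) ^ 2) := by
      rw [Real.log_pow]
      push_cast
      rw [h1]
      ring
    rw [h2, Real.exp_log (by positivity)]
  have key : h s ≤ Real.exp (C * (r ^ 2 - s ^ 2) / 2) * (s / r) ^ 2 *
      Real.exp (-2 * I) * h r := by
    have hmain := Real.exp_le_exp.mpr hlogineq
    rw [Real.exp_log hhs] at hmain
    have hdecomp : Real.exp (Real.log (h r) - 2 * Real.log (r / s) - 2 * I
        + C * (r ^ 2 - s ^ 2) / 2)
        = Real.exp (C * (r ^ 2 - s ^ 2) / 2) * (s / r) ^ 2 *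
          Real.exp (-2 * I) * h r := by
      rw [show Real.log (h r) - 2 * Real.log (r / s) - 2 * I + C * (r ^ 2 - s ^ 2) / 2
          = C * (r ^ 2 - s ^ 2) / 2 + -(2 * Real.log (r / s)) + -2 * I + Real.log (h r)
          by ring]
      rw [Real.exp_add, Real.exp_add, Real.exp_add, hexp2, Real.exp_log hhr]
    rw [hdecomp] at hmain
    exact hmain
  refine ⟨key, ?_⟩
  have hInn : 0 ≤ I := by
    apply intervalIntegral.integral_nonneg hsr'
    intro t ht
    exact div_nonneg (hN t (hsub ht)) (le_of_lt (hsub ht).1)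
  have e1 : Real.exp (C * (r ^ 2 - s ^ 2) / 2) ≤ Real.exp (C * r ^ 2 / 2) :=
    Real.exp_le_exp.mpr (by nlinarith [sq_nonneg s])
  have e2 : Real.exp (-2 * I) ≤ 1 := Real.exp_le_one_iff.mpr (by linarith)
  have hq : (0:ℝ) ≤ (s / r) ^ 2 := sq_nonneg _
  have step1 : Real.exp (C * (r ^ 2 - s ^ 2) / 2) * (s / r) ^ 2 * Real.exp (-2 * I)
      ≤ Real.exp (C * r ^ 2 / 2) * (s / r) ^ 2 := by
    have h1 : Real.exp (C * (r ^ 2 - s ^ 2) / 2) * (s / r) ^ 2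
        ≤ Real.exp (C * r ^ 2 / 2) * (s / r) ^ 2 :=
      mul_le_mul_of_nonneg_right e1 hq
    have h2 : Real.exp (C * (r ^ 2 - s ^ 2) / 2) * (s / r) ^ 2 * Real.exp (-2 * I)
        ≤ Real.exp (C * (r ^ 2 - s ^ 2) / 2) * (s / r) ^ 2 :=
      mul_le_of_le_one_right (by positivity) e2
    linarith
  exact mul_le_mul_of_nonneg_right step1 hhr.le
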